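/- Let Θ = {(x,y,z) ∈ ℝ³ : x + z ≤ 0} and C = {(x,y,z) ∈ ℝ³ : x + y + z ≤ 0, y ≥ 0}. Then the normal cone mapping 𝒩(p) = N(p, Θ) does NOT have the Aubin property with respect to C around ((0,0,0), (0,0,0)); i.e., for every κ ≥ 0 and every neighborhood U of 0 ∈ ℝ³ and V of 0 ∈ ℝ³ there exist p, q ∈ C ∩ U with N(p,Θ) ∩ V ⊄ N(q,Θ) + κ‖p − q‖ 𝔹. -/

import Mathlib

open Set Filter Topology

noncomputable section

/-- The normal cone mapping of the half-space `Θ = {x + z ≤ 0}` (empty-valued outside `Θ`). -/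
def NN12 (Θ : Set (EuclideanSpace ℝ (Fin 3))) (p : EuclideanSpace ℝ (Fin 3)) :
    Set (EuclideanSpace ℝ (Fin 3)) :=
  {v | p ∈ Θ ∧ ∀ y ∈ Θ, (inner ℝ v (y - p) : ℝ) ≤ 0}

lemma norm_vec3 (x : EuclideanSpace ℝ (Fin 3)) :
    ‖x‖ = Real.sqrt ((x 0) ^ 2 + (x 1) ^ 2 + (x 2) ^ 2) := by
  rw [EuclideanSpace.norm_eq, Fin.sum_univ_three]
  simp [sq_abs]

lemma sqrt_two_lt_two : Real.sqrt 2 < 2 := by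
  nlinarith [Real.sq_sqrt (by norm_num : (2:ℝ) ≥ 0), Real.sqrt_nonneg 2]

set_option maxHeartbeats 1000000 in
/-- With `Θ = {x + z ≤ 0}` and `C = {x + y + z ≤ 0, y ≥ 0}`, the normal cone mapping
`p ↦ N(p, Θ)` fails the Aubin property with respect to `C` around `(0, 0)`. -/
theorem stmt12 (Θ C : Set (EuclideanSpace ℝ (Fin 3)))
    (hΘ : Θ = {p | p 0 + p 2 ≤ 0})
    (hC : C = {p | p 0 + p 1 + p 2 ≤ 0 ∧ 0 ≤ p 1}) :
    ∀ κ : ℝ, 0 ≤ κ → ∀ U ∈ 𝓝 (0 : EuclideanSpace ℝ (Fin 3)),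
      ∀ V ∈ 𝓝 (0 : EuclideanSpace ℝ (Fin 3)),
      ∃ p ∈ C ∩ U, ∃ q ∈ C ∩ U,
        ¬ (NN12 Θ p ∩ V ⊆ {w | ∃ v ∈ NN12 Θ q, ‖w - v‖ ≤ κ * ‖p - q‖}) := by
  intro κ hκ U hU V hV
  obtain ⟨δU, hδU, hUb⟩ := Metric.mem_nhds_iff.1 hU
  obtain ⟨δV, hδV, hVb⟩ := Metric.mem_nhds_iff.1 hV
  set s : ℝ := δV / 2 with hs
  have hs0 : 0 < s := by positivity
  set t : ℝ := min (δU / 2) (s / (κ + 1)) with ht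
  have ht0 : 0 < t := lt_min (by positivity) (by positivity)
  have htU : t < δU := lt_of_le_of_lt (min_le_left _ _) (by linarith)
  have htκ : κ * t < s := by
    have h1 : t ≤ s / (κ + 1) := min_le_right _ _
    have h2 : κ * t ≤ κ * (s / (κ + 1)) := by nlinarith
    have h3 : κ * (s / (κ + 1)) < s := by
      rw [mul_div_assoc', div_lt_iff₀ (by linarith)]
      nlinarith
    linarith
  have hsV : s * 2 = δV := by rw [hs]; ring
  have htU2 : t * 2 ≤ δU := by
    have : t ≤ δU / 2 := min_le_left _ _
    linarith
  clear_value t s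
  clear ht hs
  set q : EuclideanSpace ℝ (Fin 3) := !₂[-t, t, 0] with hq
  set w : EuclideanSpace ℝ (Fin 3) := !₂[s, 0, s] with hw
  have hq0 : q 0 = -t := rfl
  have hq1 : q 1 = t := rfl
  have hq2 : q 2 = (0 : ℝ) := rfl
  have hw0 : w 0 = s := rfl
  have hw1 : w 1 = (0 : ℝ) := rfl
  have hw2 : w 2 = s := rfl
  have hnq : ‖q‖ = t * Real.sqrt 2 := by
    rw [norm_vec3, hq0, hq1, hq2]
    rw [show (-t) ^ 2 + t ^ 2 + (0 : ℝ) ^ 2 = t ^ 2 * 2 by ring]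
    rw [Real.sqrt_mul (sq_nonneg t), Real.sqrt_sq ht0.le]
  have hnw : ‖w‖ = s * Real.sqrt 2 := by
    rw [norm_vec3, hw0, hw1, hw2]
    rw [show s ^ 2 + (0 : ℝ) ^ 2 + s ^ 2 = s ^ 2 * 2 by ring]
    rw [Real.sqrt_mul (sq_nonneg s), Real.sqrt_sq hs0.le]
  clear_value q w
  refine ⟨0, ⟨?_, mem_of_mem_nhds hU⟩, q, ⟨?_, ?_⟩, ?_⟩
  · rw [hC]; constructor <;> simp
  · rw [hC]; constructor
    · rw [hq0, hq1, hq2]; ring_nf; exact le_refl 0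
    · rw [hq1]; exact ht0.le
  · apply hUb
    rw [Metric.mem_ball, dist_zero_right, hnq]
    nlinarith [sqrt_two_lt_two, Real.sqrt_nonneg 2]
  · intro hsub
    have hwN : w ∈ NN12 Θ 0 := by
      constructor
      · rw [hΘ]; simp
      · intro y hy
        rw [hΘ] at hy
        have : (inner ℝ w (y - 0) : ℝ) = s * y 0 + 0 * y 1 + s * y 2 := by
          rw [sub_zero, PiLp.inner_apply, Fin.sum_univ_three]
          simp [hw0, hw1, hw2, RCLike.inner_apply]
          ring
        rw [this]
        have hy' : y 0 + y 2 ≤ 0 := hy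
        nlinarith
    have hwV : w ∈ V := by
      apply hVb
      rw [Metric.mem_ball, dist_zero_right, hnw]
      nlinarith [sqrt_two_lt_two, Real.sqrt_nonneg 2]
    obtain ⟨v, ⟨hqΘ, hvN⟩, hle⟩ := hsub ⟨hwN, hwV⟩
    -- show v = 0 since q is interior to Θ
    have hv0 : v = 0 := by
      set c : ℝ := t / (|v 0 + v 2| + 1) with hc
      have hc0 : 0 < c := by positivity
      have hcb : c * |v 0 + v 2| ≤ t := by
        rw [hc, div_mul_eq_mul_div, div_le_iff₀ (by positivity)]
        have := abs_nonneg (v 0 + v 2)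
        nlinarith
      clear_value c
      have hyΘ : q + c • v ∈ Θ := by
        rw [hΘ]
        show (q + c • v) 0 + (q + c • v) 2 ≤ 0
        have e0 : (q + c • v) 0 = -t + c * v 0 := by
          rw [PiLp.add_apply, PiLp.smul_apply, hq0]; rfl
        have e2 : (q + c • v) 2 = 0 + c * v 2 := by
          rw [PiLp.add_apply, PiLp.smul_apply, hq2]; rfl
        rw [e0, e2]
        have h1 : c * (v 0 + v 2) ≤ c * |v 0 + v 2| := by
          have := le_abs_self (v 0 + v 2)
          nlinarith
        linarith
      have hvv := hvN _ hyΘ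
      have hcan : q + c • v - q = c • v := add_sub_cancel_left q (c • v)
      rw [hcan, real_inner_smul_right, real_inner_self_eq_norm_sq] at hvv
      have hn : ‖v‖ ^ 2 ≤ 0 := by nlinarith
      have : ‖v‖ = 0 := by nlinarith [sq_nonneg ‖v‖, norm_nonneg v]
      exact norm_eq_zero.1 this
    rw [hv0, sub_zero, hnw] at hle
    have hpq : ‖(0 : EuclideanSpace ℝ (Fin 3)) - q‖ = t * Real.sqrt 2 := by
      rw [zero_sub, norm_neg, hnq]
    rw [hpq] at hle
    have hsqrt : (0 : ℝ) < Real.sqrt 2 := Real.sqrt_pos.2 (by norm_num)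
    nlinarith [hle, htκ]
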